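/- Let P be a simple thin polyomino with the S-property. Then P has a unique rook configuration of maximum size r(P), namely the set of all single cells of P. -/
import Mathlib


open Polynomial

/-- A cell, identified with its lower-left lattice corner. -/
abbrev Cell := ℤ × ℤ

/-- Two cells are neighbours if they share an edge. -/
def Adj (c d : Cell) : Prop := |c.1 - d.1| + |c.2 - d.2| = 1

/-- `b` is reachable from `a` by a chain of neighbouring cells inside `P`. -/
def ReachIn (P : Finset Cell) (a b : Cell) : Prop :=
  Relation.ReflTransGen (fun x y => x ∈ P ∧ y ∈ P ∧ Adj x y) a b

def IsConnectedSet (P : Finset Cell) : Prop := ∀ a ∈ P, ∀ b ∈ P, ReachIn P a b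

/-- A polyomino: a nonempty finite edge-connected collection of cells. -/
def IsPolyomino (P : Finset Cell) : Prop := P.Nonempty ∧ IsConnectedSet P

/-- Simply connected: the complement of `P` in `ℤ²` is connected. -/
def IsSimple (P : Finset Cell) : Prop :=
  ∀ a b : Cell, a ∉ P → b ∉ P →
    Relation.ReflTransGen (fun x y => x ∉ P ∧ y ∉ P ∧ Adj x y) a b

/-- Thin: no 2×2 square of cells. -/
def IsThin (P : Finset Cell) : Prop :=
  ¬ ∃ p : Cell, p ∈ P ∧ (p.1 + 1, p.2) ∈ P ∧ (p.1, p.2 + 1) ∈ P ∧ (p.1 + 1, p.2 + 1) ∈ P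

def IsHorizInterval (I : Finset Cell) : Prop :=
  ∃ j a b : ℤ, a ≤ b ∧ I = (Finset.Icc a b).image (fun x => ((x, j) : Cell))

def IsVertInterval (I : Finset Cell) : Prop :=
  ∃ i a b : ℤ, a ≤ b ∧ I = (Finset.Icc a b).image (fun y => ((i, y) : Cell))

/-- An inner interval of `P`: a horizontal or vertical strip of cells contained in `P`. -/
def IsInnerInterval (P I : Finset Cell) : Prop :=
  (IsHorizInterval I ∨ IsVertInterval I) ∧ I ⊆ P

/-- A maximal inner interval of `P`. -/
def IsMaxInterval (P I : Finset Cell) : Prop :=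
  IsInnerInterval P I ∧ ∀ I', IsInnerInterval P I' → I ⊆ I' → I' = I

/-- A single cell: a cell belonging to exactly one maximal inner interval. -/
def IsSingleCell (P : Finset Cell) (c : Cell) : Prop :=
  c ∈ P ∧ ∃! I, IsMaxInterval P I ∧ c ∈ I

/-- The S-property: every maximal inner interval has exactly one single cell. -/
def SProperty (P : Finset Cell) : Prop :=
  ∀ I, IsMaxInterval P I → ∃! c, c ∈ I ∧ IsSingleCell P c

/-- A rook configuration: cells of `P`, pairwise not in a common inner interval. -/
def IsRookConfig (P S : Finset Cell) : Prop :=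
  S ⊆ P ∧ ∀ c ∈ S, ∀ d ∈ S, c ≠ d → ¬ ∃ I, IsInnerInterval P I ∧ c ∈ I ∧ d ∈ I

open scoped Classical in
/-- The rook polynomial of `P`. -/
noncomputable def rookPoly (P : Finset Cell) : Polynomial ℤ :=
  ∑ S ∈ P.powerset.filter (fun S => IsRookConfig P S), (X : Polynomial ℤ) ^ S.card

/-- The rook number: the degree of the rook polynomial. -/
noncomputable def rookNumber (P : Finset Cell) : ℕ := (rookPoly P).natDegree

open scoped Classical in
/-- Generating polynomial of rook configurations of `P` avoiding all cells of `A`. -/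
noncomputable def rookPolyAvoid (P A : Finset Cell) : Polynomial ℤ :=
  ∑ S ∈ P.powerset.filter (fun S => IsRookConfig P S ∧ Disjoint S A),
    (X : Polynomial ℤ) ^ S.card

open scoped Classical in
/-- An end-cell of an interval: it has exactly one neighbour inside the interval. -/
noncomputable def IsEndCell (I : Finset Cell) (c : Cell) : Prop :=
  c ∈ I ∧ (I.filter (fun d => Adj c d)).card = 1

/-- A collapse datum `(I, J, P^I)` on a polyomino `P`. -/
def IsCollapseDatum (P I J PI : Finset Cell) : Prop :=
  IsMaxInterval P I ∧ IsMaxInterval P J ∧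
  (∃ c, I ∩ J = {c}) ∧
  (∀ J', IsMaxInterval P J' → (∃ c, I ∩ J' = {c}) → J' = J) ∧
  PI ⊆ J ∧ ¬ (I ∩ J ⊆ PI) ∧ IsConnectedSet PI ∧
  (P \ (I ∪ PI)).Nonempty ∧ IsConnectedSet (P \ (I ∪ PI))

/-- The second end-cell of `J` in a collapse datum: the end-cell of `J` other than
the first end-cell (which is `I ∩ J` if `P^I = ∅`, and the cell of `P^I` otherwise). -/
noncomputable def IsSecondEndCell (I J PI : Finset Cell) (c : Cell) : Prop :=
  IsEndCell J c ∧ ((PI = ∅ ∧ c ∉ I) ∨ (PI ≠ ∅ ∧ c ∉ PI))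

open scoped Classical in
/-- The neighbours of a cell `c` inside `P`. -/
noncomputable def nbrs (P : Finset Cell) (c : Cell) : Finset Cell :=
  P.filter (fun d => Adj c d)

open scoped Classical in
/-- The connected component of `x` in `S`. -/
noncomputable def componentOf (S : Finset Cell) (x : Cell) : Finset Cell :=
  S.filter (fun y => ReachIn S x y)

/-- A path of cells in `P` from `c` to `d`: pairwise distinct, consecutive neighbours. -/
def IsCellPath (P : Finset Cell) (l : List Cell) (c d : Cell) : Prop :=
  l ≠ [] ∧ l.head? = some c ∧ l.getLast? = some d ∧ l.Nodup ∧
    (∀ x ∈ l, x ∈ P) ∧ l.Chain' Adj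

/-! ### Auxiliary development for the main theorem -/

open scoped Classical

namespace RookAux

variable {P : Finset Cell} {c d : Cell}

/-- The set of `x` such that the whole horizontal segment between `x` and `c.1`
(in the row of `c`) lies in `P`. -/
noncomputable def segX (P : Finset Cell) (c : Cell) : Finset ℤ :=
  (P.image Prod.fst).filter
    (fun x => ∀ z ∈ Finset.Icc (min x c.1) (max x c.1), ((z, c.2) : Cell) ∈ P)

noncomputable def segY (P : Finset Cell) (c : Cell) : Finset ℤ :=
  (P.image Prod.snd).filter
    (fun y => ∀ z ∈ Finset.Icc (min y c.2) (max y c.2), ((c.1, z) : Cell) ∈ P)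

lemma mem_segX {x : ℤ} :
    x ∈ segX P c ↔ ∀ z ∈ Finset.Icc (min x c.1) (max x c.1), ((z, c.2) : Cell) ∈ P := by
  constructor
  · exact fun h => (Finset.mem_filter.mp h).2
  · intro h
    refine Finset.mem_filter.mpr ⟨?_, h⟩
    have hx : ((x, c.2) : Cell) ∈ P :=
      h x (Finset.mem_Icc.mpr ⟨min_le_left _ _, le_max_left _ _⟩)
    exact Finset.mem_image.mpr ⟨(x, c.2), hx, rfl⟩

lemma mem_segY {y : ℤ} :
    y ∈ segY P c ↔ ∀ z ∈ Finset.Icc (min y c.2) (max y c.2), ((c.1, z) : Cell) ∈ P := by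
  constructor
  · exact fun h => (Finset.mem_filter.mp h).2
  · intro h
    refine Finset.mem_filter.mpr ⟨?_, h⟩
    have hy : ((c.1, y) : Cell) ∈ P :=
      h y (Finset.mem_Icc.mpr ⟨min_le_left _ _, le_max_left _ _⟩)
    exact Finset.mem_image.mpr ⟨(c.1, y), hy, rfl⟩

lemma self_mem_segX (hc : c ∈ P) : c.1 ∈ segX P c := by
  refine mem_segX.mpr ?_
  intro z hz
  rw [min_self, max_self, Finset.mem_Icc] at hz
  have : z = c.1 := le_antisymm hz.2 hz.1
  subst this
  simpa using hc

lemma self_mem_segY (hc : c ∈ P) : c.2 ∈ segY P c := by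
  refine mem_segY.mpr ?_
  intro z hz
  rw [min_self, max_self, Finset.mem_Icc] at hz
  have : z = c.2 := le_antisymm hz.2 hz.1
  subst this
  simpa using hc

lemma segX_between {x y z : ℤ} (hx : x ∈ segX P c) (hy : y ∈ segX P c)
    (h1 : x ≤ z) (h2 : z ≤ y) : z ∈ segX P c := by
  rw [mem_segX] at hx hy ⊢
  intro w hw
  rw [Finset.mem_Icc] at hw
  rcases le_total z c.1 with h | h
  · exact hx w (Finset.mem_Icc.mpr (by omega))
  · exact hy w (Finset.mem_Icc.mpr (by omega))

lemma segY_between {x y z : ℤ} (hx : x ∈ segY P c) (hy : y ∈ segY P c)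
    (h1 : x ≤ z) (h2 : z ≤ y) : z ∈ segY P c := by
  rw [mem_segY] at hx hy ⊢
  intro w hw
  rw [Finset.mem_Icc] at hw
  rcases le_total z c.2 with h | h
  · exact hx w (Finset.mem_Icc.mpr (by omega))
  · exact hy w (Finset.mem_Icc.mpr (by omega))

lemma segX_exists_Icc (hc : c ∈ P) :
    ∃ a b : ℤ, a ≤ b ∧ segX P c = Finset.Icc a b := by
  have hne : (segX P c).Nonempty := ⟨c.1, self_mem_segX hc⟩
  refine ⟨(segX P c).min' hne, (segX P c).max' hne, Finset.min'_le _ _ (Finset.max'_mem _ hne), ?_⟩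
  ext z
  rw [Finset.mem_Icc]
  constructor
  · exact fun hz => ⟨Finset.min'_le _ _ hz, Finset.le_max' _ _ hz⟩
  · rintro ⟨h1, h2⟩
    exact segX_between (Finset.min'_mem _ hne) (Finset.max'_mem _ hne) h1 h2

lemma segY_exists_Icc (hc : c ∈ P) :
    ∃ a b : ℤ, a ≤ b ∧ segY P c = Finset.Icc a b := by
  have hne : (segY P c).Nonempty := ⟨c.2, self_mem_segY hc⟩
  refine ⟨(segY P c).min' hne, (segY P c).max' hne, Finset.min'_le _ _ (Finset.max'_mem _ hne), ?_⟩
  ext z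
  rw [Finset.mem_Icc]
  constructor
  · exact fun hz => ⟨Finset.min'_le _ _ hz, Finset.le_max' _ _ hz⟩
  · rintro ⟨h1, h2⟩
    exact segY_between (Finset.min'_mem _ hne) (Finset.max'_mem _ hne) h1 h2

/-- The maximal horizontal run through `c`. -/
noncomputable def maxH (P : Finset Cell) (c : Cell) : Finset Cell :=
  (segX P c).image (fun x => ((x, c.2) : Cell))

/-- The maximal vertical run through `c`. -/
noncomputable def maxV (P : Finset Cell) (c : Cell) : Finset Cell :=
  (segY P c).image (fun y => ((c.1, y) : Cell))

lemma mem_maxH_iff : d ∈ maxH P c ↔ d.1 ∈ segX P c ∧ d.2 = c.2 := by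
  constructor
  · intro h
    obtain ⟨x, hx, h⟩ := Finset.mem_image.mp h
    subst h
    exact ⟨hx, rfl⟩
  · rintro ⟨h1, h2⟩
    exact Finset.mem_image.mpr ⟨d.1, h1, by rw [← h2]⟩

lemma mem_maxV_iff : d ∈ maxV P c ↔ d.2 ∈ segY P c ∧ d.1 = c.1 := by
  constructor
  · intro h
    obtain ⟨y, hy, h⟩ := Finset.mem_image.mp h
    subst h
    exact ⟨hy, rfl⟩
  · rintro ⟨h1, h2⟩
    exact Finset.mem_image.mpr ⟨d.2, h1, by rw [← h2]⟩

lemma mem_maxH (hc : c ∈ P) : c ∈ maxH P c :=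
  mem_maxH_iff.mpr ⟨self_mem_segX hc, rfl⟩

lemma mem_maxV (hc : c ∈ P) : c ∈ maxV P c :=
  mem_maxV_iff.mpr ⟨self_mem_segY hc, rfl⟩

lemma maxH_horiz (hc : c ∈ P) : IsHorizInterval (maxH P c) := by
  obtain ⟨a, b, hab, h⟩ := segX_exists_Icc hc
  exact ⟨c.2, a, b, hab, by rw [maxH, h]⟩

lemma maxV_vert (hc : c ∈ P) : IsVertInterval (maxV P c) := by
  obtain ⟨a, b, hab, h⟩ := segY_exists_Icc hc
  exact ⟨c.1, a, b, hab, by rw [maxV, h]⟩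

lemma maxH_subset : maxH P c ⊆ P := by
  intro d hd
  obtain ⟨x, hx, rfl⟩ := Finset.mem_image.mp hd
  exact mem_segX.mp hx x (Finset.mem_Icc.mpr ⟨min_le_left _ _, le_max_left _ _⟩)

lemma maxV_subset : maxV P c ⊆ P := by
  intro d hd
  obtain ⟨y, hy, rfl⟩ := Finset.mem_image.mp hd
  exact mem_segY.mp hy y (Finset.mem_Icc.mpr ⟨min_le_left _ _, le_max_left _ _⟩)

lemma maxH_inner (hc : c ∈ P) : IsInnerInterval P (maxH P c) :=
  ⟨Or.inl (maxH_horiz hc), maxH_subset⟩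

lemma maxV_inner (hc : c ∈ P) : IsInnerInterval P (maxV P c) :=
  ⟨Or.inr (maxV_vert hc), maxV_subset⟩

lemma horiz_subset_maxH {I : Finset Cell} (hIP : I ⊆ P) (hh : IsHorizInterval I)
    (hcI : c ∈ I) : I ⊆ maxH P c := by
  obtain ⟨j, a, b, hab, rfl⟩ := hh
  obtain ⟨xc, hxc, hceq⟩ := Finset.mem_image.mp hcI
  rw [Finset.mem_Icc] at hxc
  have hj : c.2 = j := by rw [← hceq]
  have hc1 : c.1 = xc := by rw [← hceq]
  intro e he
  obtain ⟨x, hx, rfl⟩ := Finset.mem_image.mp he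
  rw [Finset.mem_Icc] at hx
  refine mem_maxH_iff.mpr ⟨?_, hj.symm⟩
  refine mem_segX.mpr ?_
  intro z hz
  rw [Finset.mem_Icc] at hz
  have hzmem : ((z, j) : Cell) ∈ (Finset.Icc a b).image (fun x => ((x, j) : Cell)) :=
    Finset.mem_image.mpr ⟨z, Finset.mem_Icc.mpr (by omega), rfl⟩
  rw [hj]
  exact hIP hzmem

lemma vert_subset_maxV {I : Finset Cell} (hIP : I ⊆ P) (hv : IsVertInterval I)
    (hcI : c ∈ I) : I ⊆ maxV P c := by
  obtain ⟨i, a, b, hab, rfl⟩ := hv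
  obtain ⟨yc, hyc, hceq⟩ := Finset.mem_image.mp hcI
  rw [Finset.mem_Icc] at hyc
  have hi : c.1 = i := by rw [← hceq]
  have hc2 : c.2 = yc := by rw [← hceq]
  intro e he
  obtain ⟨y, hy, rfl⟩ := Finset.mem_image.mp he
  rw [Finset.mem_Icc] at hy
  refine mem_maxV_iff.mpr ⟨?_, hi.symm⟩
  refine mem_segY.mpr ?_
  intro z hz
  rw [Finset.mem_Icc] at hz
  have hzmem : ((i, z) : Cell) ∈ (Finset.Icc a b).image (fun y => ((i, y) : Cell)) :=
    Finset.mem_image.mpr ⟨z, Finset.mem_Icc.mpr (by omega), rfl⟩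
  rw [hi]
  exact hIP hzmem

lemma maxH_isMax (hc : c ∈ P) {x : ℤ} (hx : x ∈ segX P c) (hne : x ≠ c.1) :
    IsMaxInterval P (maxH P c) := by
  refine ⟨maxH_inner hc, ?_⟩
  intro I' hI' hsub
  have hcI' : c ∈ I' := hsub (mem_maxH hc)
  rcases hI'.1 with hh | hv
  · exact Finset.Subset.antisymm (horiz_subset_maxH hI'.2 hh hcI') hsub
  · exfalso
    obtain ⟨i, a, b, hab, rfl⟩ := hv
    have h1 : ((x, c.2) : Cell) ∈ _ := hsub (mem_maxH_iff.mpr ⟨hx, rfl⟩)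
    obtain ⟨y1, _, he1⟩ := Finset.mem_image.mp h1
    obtain ⟨y2, _, he2⟩ := Finset.mem_image.mp hcI'
    have e1 := congrArg Prod.fst he1
    have e2 := congrArg Prod.fst he2
    simp at e1 e2
    omega

lemma maxV_isMax (hc : c ∈ P) {y : ℤ} (hy : y ∈ segY P c) (hne : y ≠ c.2) :
    IsMaxInterval P (maxV P c) := by
  refine ⟨maxV_inner hc, ?_⟩
  intro I' hI' hsub
  have hcI' : c ∈ I' := hsub (mem_maxV hc)
  rcases hI'.1 with hh | hv
  · exfalso
    obtain ⟨j, a, b, hab, rfl⟩ := hh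
    have h1 : ((c.1, y) : Cell) ∈ _ := hsub (mem_maxV_iff.mpr ⟨hy, rfl⟩)
    obtain ⟨x1, _, he1⟩ := Finset.mem_image.mp h1
    obtain ⟨x2, _, he2⟩ := Finset.mem_image.mp hcI'
    have e1 := congrArg Prod.snd he1
    have e2 := congrArg Prod.snd he2
    simp at e1 e2
    omega
  · exact Finset.Subset.antisymm (vert_subset_maxV hI'.2 hv hcI') hsub

lemma singleton_isMax (hc : c ∈ P) (hX : segX P c = {c.1}) (hY : segY P c = {c.2}) :
    IsMaxInterval P ({c} : Finset Cell) := by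
  have hH : maxH P c = {c} := by
    rw [maxH, hX]
    simp
  have hV : maxV P c = {c} := by
    rw [maxV, hY]
    simp
  refine ⟨⟨Or.inl ?_, by simpa using hc⟩, ?_⟩
  · rw [← hH]; exact maxH_horiz hc
  · intro I' hI' hsub
    have hcI' : c ∈ I' := hsub (Finset.mem_singleton_self c)
    rcases hI'.1 with hh | hv
    · exact Finset.Subset.antisymm (hH ▸ horiz_subset_maxH hI'.2 hh hcI') hsub
    · exact Finset.Subset.antisymm (hV ▸ vert_subset_maxV hI'.2 hv hcI') hsub

lemma exists_max_containing (hc : c ∈ P) : ∃ I, IsMaxInterval P I ∧ c ∈ I := by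
  by_cases hX : ∃ x ∈ segX P c, x ≠ c.1
  · obtain ⟨x, hx, hne⟩ := hX
    exact ⟨maxH P c, maxH_isMax hc hx hne, mem_maxH hc⟩
  by_cases hY : ∃ y ∈ segY P c, y ≠ c.2
  · obtain ⟨y, hy, hne⟩ := hY
    exact ⟨maxV P c, maxV_isMax hc hy hne, mem_maxV hc⟩
  push_neg at hX hY
  have hX' : segX P c = {c.1} := by
    apply Finset.Subset.antisymm
    · intro x hx
      simpa using hX x hx
    · simpa using self_mem_segX hc
  have hY' : segY P c = {c.2} := by
    apply Finset.Subset.antisymm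
    · intro y hy
      simpa using hY y hy
    · simpa using self_mem_segY hc
  exact ⟨{c}, singleton_isMax hc hX' hY', Finset.mem_singleton_self c⟩

/-- Two distinct cells lying in a common inner interval lie in a common maximal interval. -/
lemma common_max {I : Finset Cell} (hI : IsInnerInterval P I) (hc : c ∈ I) (hd : d ∈ I)
    (hne : c ≠ d) : ∃ M, IsMaxInterval P M ∧ c ∈ M ∧ d ∈ M := by
  have hcP : c ∈ P := hI.2 hc
  rcases hI.1 with hh | hv
  · have hsub := horiz_subset_maxH hI.2 hh hc
    have hdH := hsub hd
    obtain ⟨hd1, hd2⟩ := mem_maxH_iff.mp hdH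
    have hne1 : d.1 ≠ c.1 := by
      intro h
      exact hne (Prod.ext h hd2).symm
    exact ⟨maxH P c, maxH_isMax hcP hd1 hne1, mem_maxH hcP, hdH⟩
  · have hsub := vert_subset_maxV hI.2 hv hc
    have hdV := hsub hd
    obtain ⟨hd1, hd2⟩ := mem_maxV_iff.mp hdV
    have hne1 : d.2 ≠ c.2 := by
      intro h
      exact hne (Prod.ext hd2 h).symm
    exact ⟨maxV P c, maxV_isMax hcP hd1 hne1, mem_maxV hcP, hdV⟩

end RookAux

namespace RookAux

/-- An arbitrary maximal interval containing a given cell. -/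
noncomputable def pick (P : Finset Cell) (c : Cell) : Finset Cell :=
  if h : c ∈ P then (exists_max_containing h).choose else ∅

lemma pick_spec (hc : c ∈ P) : IsMaxInterval P (pick P c) ∧ c ∈ pick P c := by
  rw [pick, dif_pos hc]
  exact (exists_max_containing hc).choose_spec

/-- The finset of maximal inner intervals of `P`. -/
noncomputable def Msets (P : Finset Cell) : Finset (Finset Cell) :=
  P.powerset.filter (IsMaxInterval P)

lemma mem_Msets {I : Finset Cell} : I ∈ Msets P ↔ IsMaxInterval P I := by
  rw [Msets, Finset.mem_filter, Finset.mem_powerset]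
  exact ⟨fun h => h.2, fun h => ⟨h.1.2, h⟩⟩

lemma card_singles_eq (hS : SProperty P) :
    (P.filter (IsSingleCell P)).card = (Msets P).card := by
  refine Finset.card_bij (fun c _ => pick P c) ?_ ?_ ?_
  · intro a ha
    exact mem_Msets.mpr (pick_spec (Finset.mem_filter.mp ha).1).1
  · intro a₁ ha₁ a₂ ha₂ h
    have h1 := Finset.mem_filter.mp ha₁
    have h2 := Finset.mem_filter.mp ha₂
    have h' : pick P a₁ = pick P a₂ := h
    obtain ⟨c0, hc0, huniq⟩ := hS (pick P a₁) (pick_spec h1.1).1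
    have e1 : a₁ = c0 := huniq a₁ ⟨(pick_spec h1.1).2, h1.2⟩
    have e2 : a₂ = c0 := huniq a₂ ⟨h' ▸ (pick_spec h2.1).2, h2.2⟩
    rw [e1, e2]
  · intro I hI
    have hImax := mem_Msets.mp hI
    obtain ⟨c0, ⟨hc0I, hc0s⟩, _⟩ := hS I hImax
    have hc0P : c0 ∈ P := hc0s.1
    refine ⟨c0, Finset.mem_filter.mpr ⟨hc0P, hc0s⟩, ?_⟩
    exact hc0s.2.unique ⟨(pick_spec hc0P).1, (pick_spec hc0P).2⟩ ⟨hImax, hc0I⟩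

lemma rook_card_le {S : Finset Cell} (hR : IsRookConfig P S) :
    S.card ≤ (Msets P).card := by
  refine Finset.card_le_card_of_injOn (pick P) ?_ ?_
  · intro a ha
    exact mem_Msets.mpr (pick_spec (hR.1 ha)).1
  · intro a ha b hb h
    by_contra hne
    refine hR.2 a ha b hb hne ⟨pick P a, (pick_spec (hR.1 ha)).1.1,
      (pick_spec (hR.1 ha)).2, ?_⟩
    rw [h]
    exact (pick_spec (hR.1 hb)).2

lemma singles_rook (hS : SProperty P) : IsRookConfig P (P.filter (IsSingleCell P)) := by
  refine ⟨Finset.filter_subset _ _, ?_⟩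
  intro a ha b hb hne ⟨I, hI, haI, hbI⟩
  obtain ⟨M, hM, haM, hbM⟩ := common_max hI haI hbI hne
  obtain ⟨c0, _, huniq⟩ := hS M hM
  have e1 : a = c0 := huniq a ⟨haM, (Finset.mem_filter.mp ha).2⟩
  have e2 : b = c0 := huniq b ⟨hbM, (Finset.mem_filter.mp hb).2⟩
  exact hne (e1.trans e2.symm)

lemma max_rook_eq_singles (hS : SProperty P) {S : Finset Cell} (hR : IsRookConfig P S)
    (hcard : S.card = (Msets P).card) : S = P.filter (IsSingleCell P) := by
  have hmaps : ∀ a ∈ S, pick P a ∈ Msets P :=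
    fun a ha => mem_Msets.mpr (pick_spec (hR.1 ha)).1
  have hinj : Set.InjOn (pick P) S := by
    intro a ha b hb h
    simp only [Finset.coe_mem, Finset.mem_coe] at ha hb
    by_contra hne
    refine hR.2 a ha b hb hne ⟨pick P a, (pick_spec (hR.1 ha)).1.1,
      (pick_spec (hR.1 ha)).2, ?_⟩
    rw [h]
    exact (pick_spec (hR.1 hb)).2
  have himage : S.image (pick P) = Msets P := by
    apply Finset.eq_of_subset_of_card_le
    · intro I hI
      obtain ⟨a, ha, rfl⟩ := Finset.mem_image.mp hI
      exact hmaps a ha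
    · rw [Finset.card_image_of_injOn hinj, hcard]
  have hsub : S ⊆ P.filter (IsSingleCell P) := by
    intro s hs
    have hsP : s ∈ P := hR.1 hs
    refine Finset.mem_filter.mpr ⟨hsP, hsP, ⟨pick P s, ⟨(pick_spec hsP).1, (pick_spec hsP).2⟩, ?_⟩⟩
    rintro J ⟨hJmax, hsJ⟩
    have hJM : J ∈ Msets P := mem_Msets.mpr hJmax
    rw [← himage] at hJM
    obtain ⟨t, ht, rfl⟩ := Finset.mem_image.mp hJM
    have hts : t = s := by
      by_contra hne
      exact hR.2 t ht s hs hne ⟨pick P t, (pick_spec (hR.1 ht)).1.1,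
        (pick_spec (hR.1 ht)).2, hsJ⟩
    rw [hts]
  apply Finset.eq_of_subset_of_card_le hsub
  rw [card_singles_eq hS, ← hcard]

lemma rookNumber_eq (hS : SProperty P) : rookNumber P = (Msets P).card := by
  have hsingles : P.filter (IsSingleCell P) ∈
      P.powerset.filter (fun S => IsRookConfig P S) :=
    Finset.mem_filter.mpr ⟨Finset.mem_powerset.mpr (Finset.filter_subset _ _), singles_rook hS⟩
  apply le_antisymm
  · rw [rookNumber, rookPoly]
    apply Polynomial.natDegree_sum_le_of_forall_le
    intro S hSF
    calc (Polynomial.X ^ S.card : Polynomial ℤ).natDegree ≤ S.card :=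
          Polynomial.natDegree_X_pow_le _
      _ ≤ (Msets P).card := rook_card_le (Finset.mem_filter.mp hSF).2
  · apply Polynomial.le_natDegree_of_ne_zero
    rw [rookPoly, Polynomial.finset_sum_coeff]
    have : ∀ S ∈ P.powerset.filter (fun S => IsRookConfig P S),
        (Polynomial.X ^ S.card : Polynomial ℤ).coeff (Msets P).card
          = if (Msets P).card = S.card then 1 else 0 :=
      fun S _ => Polynomial.coeff_X_pow _ _
    rw [Finset.sum_congr rfl this, Finset.sum_boole]
    have hpos : ((P.powerset.filter (fun S => IsRookConfig P S)).filter
        (fun S => (Msets P).card = S.card)).Nonempty :=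
      ⟨P.filter (IsSingleCell P),
        Finset.mem_filter.mpr ⟨hsingles, (card_singles_eq hS).symm⟩⟩
    have hcard0 := Finset.card_pos.mpr hpos
    exact_mod_cast hcard0.ne'

end RookAux


open scoped Classical in
/-- A simple thin polyomino with the S-property has a unique maximum rook configuration,
namely the set of all its single cells. -/
theorem unique_max_rook_config (P : Finset Cell) (hP : IsPolyomino P) (hs : IsSimple P)
    (ht : IsThin P) (hS : SProperty P) :
    IsRookConfig P (P.filter (fun c => IsSingleCell P c)) ∧
    (P.filter (fun c => IsSingleCell P c)).card = rookNumber P ∧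
    ∀ S : Finset Cell, IsRookConfig P S → S.card = rookNumber P →
      S = P.filter (fun c => IsSingleCell P c) := by
  refine ⟨RookAux.singles_rook hS, ?_, ?_⟩
  · rw [RookAux.rookNumber_eq hS]
    exact RookAux.card_singles_eq hS
  · intro S hR hc
    exact RookAux.max_rook_eq_singles hS hR (by rw [hc, RookAux.rookNumber_eq hS])
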